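/- Let 0 < α ≤ 1, let Ā : 𝓑 → ℝ be α-Hölder and normalized, and let m be the unique Borel probability measure fixed by L_Ā^*. Then L_Ā has a spectral gap on the Hölder space: there exist constants C > 0 and r ∈ (0,1) such that for every α-Hölder function w : 𝓑 → ℝ with ∫ w dm = 0 and every n ≥ 1, ‖L_Ā^n(w)‖_α ≤ C·r^n·‖w‖_α, where ‖w‖_α = ‖w‖_∞ + sup_{x≠y} |w(x) − w(y)|/d(x,y)^α. -/

import Mathlib

open MeasureTheory Filter Topology

set_option maxHeartbeats 1000000

noncomputable section

instance : Fact (0 < 2 * Real.pi) := ⟨by positivity⟩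

/-- The circle `M = ℝ/2πℤ` with arc-length metric. -/
abbrev Circ : Type := AddCircle (2 * Real.pi)

/-- The normalized Haar (Lebesgue) probability measure on the circle. -/
def haarC : Measure Circ := AddCircle.haarAddCircle

/-- The Bernoulli space `𝓑 = M^ℕ`. -/
abbrev Bs : Type := ℕ → Circ

/-- The left shift `σ`. -/
def shift (x : Bs) : Bs := fun n => x (n + 1)

/-- Prepending a symbol: `cons a x = ax = (a, x₀, x₁, …)`. -/
def cons (a : Circ) (x : Bs) : Bs := fun n =>
  match n with
  | 0 => a
  | k + 1 => x k

/-- The metric `d(x,y) = Σ_k 2^{-k} d_M(x_k, y_k)` on `𝓑`. -/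
def dB (x y : Bs) : ℝ := ∑' k : ℕ, (1 / 2 : ℝ) ^ k * dist (x k) (y k)

/-- `A` is α-Hölder with constant `H` for the metric `dB`. -/
def IsHolderB (α H : ℝ) (A : Bs → ℝ) : Prop := ∀ x y, |A x - A y| ≤ H * dB x y ^ α

/-- The Ruelle operator `L_A ψ (x) = ∫_M e^{A(ax)} ψ(ax) da`. -/
def Ruelle (A : Bs → ℝ) (ψ : Bs → ℝ) : Bs → ℝ :=
  fun x => ∫ a, Real.exp (A (cons a x)) * ψ (cons a x) ∂haarC

/-- `A` is normalized: `∫_M e^{A(ax)} da = 1` for all `x`. -/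
def NormalizedB (A : Bs → ℝ) : Prop := ∀ x, ∫ a, Real.exp (A (cons a x)) ∂haarC = 1

/-- `m` is a fixed point of the dual Ruelle operator `L_A^*`. -/
def FixedDual (A : Bs → ℝ) (m : Measure Bs) : Prop :=
  ∀ ψ : Bs → ℝ, Continuous ψ → (∃ C, ∀ x, |ψ x| ≤ C) →
    ∫ x, Ruelle A ψ x ∂m = ∫ x, ψ x ∂m

/-- The supremum norm. -/
def supNormB (w : Bs → ℝ) : ℝ := ⨆ x : Bs, |w x|

/-- The α-Hölder seminorm `|w|_α = sup_{x ≠ y} |w(x) − w(y)|/d(x,y)^α`. -/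
def holderSemi (α : ℝ) (w : Bs → ℝ) : ℝ :=
  sSup {c : ℝ | ∃ x y, x ≠ y ∧ c = |w x - w y| / dB x y ^ α}

/-- The Hölder norm `‖w‖_α = ‖w‖_∞ + |w|_α`. -/
def holderNorm (α : ℝ) (w : Bs → ℝ) : ℝ := supNormB w + holderSemi α w

instance : IsProbabilityMeasure haarC := by unfold haarC; infer_instance

lemma distC_le (a b : Circ) : dist a b ≤ Real.pi := by
  have h := AddCircle.norm_le_half_period (p := 2 * Real.pi) (x := a - b)
    (by positivity)
  rw [dist_eq_norm]
  have hpi : |2 * Real.pi| / 2 = Real.pi := by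
    rw [abs_of_pos (by positivity)]; ring
  rw [hpi] at h; exact h

lemma summable_dB (x y : Bs) :
    Summable (fun k : ℕ => (1 / 2 : ℝ) ^ k * dist (x k) (y k)) := by
  have hg : Summable (fun k : ℕ => (1/2:ℝ)^k * Real.pi) :=
    (summable_geometric_of_lt_one (by norm_num) (by norm_num)).mul_right _
  refine Summable.of_nonneg_of_le (fun k => ?_) (fun k => ?_) hg
  · positivity
  · exact mul_le_mul_of_nonneg_left (distC_le _ _) (by positivity)

lemma dB_nonneg (x y : Bs) : 0 ≤ dB x y :=
  tsum_nonneg (fun k => by positivity)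

lemma dB_comm (x y : Bs) : dB x y = dB y x := by
  unfold dB; congr 1; ext k; rw [dist_comm]

lemma dB_le (x y : Bs) : dB x y ≤ 2 * Real.pi := by
  have : dB x y ≤ ∑' k : ℕ, (1/2:ℝ)^k * Real.pi := by
    apply Summable.tsum_le_tsum _ (summable_dB x y)
      ((summable_geometric_of_lt_one (by norm_num) (by norm_num)).mul_right _)
    intro k
    exact mul_le_mul_of_nonneg_left (distC_le _ _) (by positivity)
  calc dB x y ≤ ∑' k : ℕ, (1/2:ℝ)^k * Real.pi := this
    _ = (∑' k : ℕ, (1/2:ℝ)^k) * Real.pi := by rw [tsum_mul_right]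
    _ = 2 * Real.pi := by rw [tsum_geometric_of_lt_one (by norm_num) (by norm_num)]; norm_num

lemma dB_cons (a : Circ) (x y : Bs) : dB (cons a x) (cons a y) = 2⁻¹ * dB x y := by
  unfold dB
  rw [← tsum_mul_left]
  rw [Summable.tsum_eq_zero_add (summable_dB (cons a x) (cons a y))]
  simp only [cons, pow_zero, one_mul, dist_self, pow_succ]
  rw [zero_add]
  congr 1; ext k; ring

lemma dB_pos (x y : Bs) (h : x ≠ y) : 0 < dB x y := by
  obtain ⟨k, hk⟩ : ∃ k, x k ≠ y k := by
    by_contra hc; push_neg at hc; exact h (funext hc)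
  have hterm : 0 < (1/2:ℝ)^k * dist (x k) (y k) := by
    have := dist_pos.mpr hk; positivity
  have := (summable_dB x y)
  calc 0 < (1/2:ℝ)^k * dist (x k) (y k) := hterm
    _ ≤ dB x y := Summable.le_tsum this k (fun j _ => by positivity)

lemma tendsto_dB (x : Bs) : Tendsto (fun y => dB x y) (𝓝 x) (𝓝 0) := by
  rw [Metric.tendsto_nhds]
  intro ε hε
  obtain ⟨N, hN⟩ : ∃ N : ℕ, (1/2:ℝ)^N * (2 * Real.pi) < ε/2 := by
    have h := tendsto_pow_atTop_nhds_zero_of_lt_one (r := (1/2:ℝ)) (by norm_num) (by norm_num)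
    have h2 := (h.mul_const (2*Real.pi)).eventually (gt_mem_nhds (show (0:ℝ) * (2*Real.pi) < ε/2 by simpa using half_pos hε))
    exact h2.exists
  have hsum : ∀ y : Bs, dB x y ≤ (∑ k ∈ Finset.range N, (1/2:ℝ)^k * dist (x k) (y k)) + (1/2:ℝ)^N * (2*Real.pi) := by
    intro y
    have hs := summable_dB x y
    rw [show dB x y = _ from (hs.sum_add_tsum_nat_add N).symm]
    gcongr
    have hg : Summable (fun k : ℕ => (1/2:ℝ)^(k+N) * Real.pi) := by
      have : Summable (fun k : ℕ => (1/2:ℝ)^k * Real.pi) :=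
        (summable_geometric_of_lt_one (by norm_num) (by norm_num)).mul_right _
      exact (summable_nat_add_iff N).mpr this
    calc ∑' k : ℕ, (1/2:ℝ)^(k+N) * dist (x (k+N)) (y (k+N))
        ≤ ∑' k : ℕ, (1/2:ℝ)^(k+N) * Real.pi := by
          refine Summable.tsum_le_tsum (fun k => ?_) ((summable_nat_add_iff N).mpr hs) hg
          exact mul_le_mul_of_nonneg_left (distC_le _ _) (by positivity)
      _ = (1/2:ℝ)^N * ((∑' k : ℕ, (1/2:ℝ)^k) * Real.pi) := by
          rw [← tsum_mul_right, ← tsum_mul_left]; congr 1; ext k; ring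
      _ = (1/2:ℝ)^N * (2*Real.pi) := by
          rw [tsum_geometric_of_lt_one (by norm_num) (by norm_num)]; ring
  have hcont : Tendsto (fun y : Bs => ∑ k ∈ Finset.range N, (1/2:ℝ)^k * dist (x k) (y k)) (𝓝 x) (𝓝 0) := by
    have : Continuous (fun y : Bs => ∑ k ∈ Finset.range N, (1/2:ℝ)^k * dist (x k) (y k)) := by
      apply continuous_finset_sum
      intro k _
      exact (continuous_const.mul ((continuous_const.dist (continuous_apply k))))
    have hx : (∑ k ∈ Finset.range N, (1/2:ℝ)^k * dist (x k) (x k)) = 0 := by simp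
    simpa [hx] using this.tendsto x
  have := hcont.eventually (gt_mem_nhds (half_pos hε))
  filter_upwards [this] with y hy
  rw [Real.dist_eq, sub_zero, abs_of_nonneg (dB_nonneg x y)]
  calc dB x y ≤ _ := hsum y
    _ < ε/2 + ε/2 := by linarith
    _ = ε := by ring

lemma holder_continuous {α K : ℝ} (hα : 0 < α) (v : Bs → ℝ)
    (h : ∀ x y, |v x - v y| ≤ K * dB x y ^ α) : Continuous v := by
  rw [continuous_iff_continuousAt]
  intro x
  rw [ContinuousAt, Metric.tendsto_nhds]
  intro ε hε
  have h1 : Tendsto (fun y => K * dB x y ^ α) (𝓝 x) (𝓝 0) := by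
    have h2 : Tendsto (fun y => dB x y ^ α) (𝓝 x) (𝓝 ((0:ℝ) ^ α)) := by
      exact ((Real.continuousAt_rpow_const 0 α (Or.inr (le_of_lt hα))).tendsto.comp (tendsto_dB x))
    have h0 : (0:ℝ) ^ α = 0 := Real.zero_rpow (ne_of_gt hα)
    rw [h0] at h2
    simpa using h2.const_mul K
  have := h1.eventually (gt_mem_nhds hε)
  filter_upwards [this] with y hy
  rw [Real.dist_eq]
  calc |v y - v x| = |v x - v y| := abs_sub_comm _ _
    _ ≤ K * dB x y ^ α := h x y
    _ < ε := hy

lemma continuous_cons (x : Bs) : Continuous (fun a : Circ => cons a x) := by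
  apply continuous_pi
  intro k
  match k with
  | 0 => exact continuous_id
  | k + 1 => exact continuous_const

lemma integrable_of_continuous (f : Circ → ℝ) (h : Continuous f) : Integrable f haarC :=
  h.integrable_of_hasCompactSupport (HasCompactSupport.of_compactSpace f)

lemma dB_self (x : Bs) : dB x x = 0 := by
  unfold dB; simp

namespace SGaux

def th (α : ℝ) : ℝ := (2⁻¹ : ℝ) ^ α

lemma th_pos {α : ℝ} : 0 < th α := Real.rpow_pos_of_pos (by norm_num) α

lemma th_lt_one {α : ℝ} (hα : 0 < α) : th α < 1 :=
  Real.rpow_lt_one (by norm_num) (by norm_num) hα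

lemma half_rpow {α : ℝ} (d : ℝ) (hd : 0 ≤ d) : (2⁻¹ * d) ^ α = th α * d ^ α :=
  Real.mul_rpow (by norm_num) hd

lemma step {α H₀ : ℝ} (hα0 : 0 < α) (hH : 0 ≤ H₀) {A : Bs → ℝ}
    (hA : IsHolderB α H₀ A) (hnorm : NormalizedB A)
    (v : Bs → ℝ) (hc : Continuous v) (S : ℝ) (hb : ∀ z, |v z| ≤ S)
    (O : ℝ) (ho : ∀ p q, v p - v q ≤ O)
    (x y : Bs) (t : ℝ) (ht : 0 ≤ t)
    (hd : ∀ a, |v (cons a x) - v (cons a y)| ≤ t) :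
    ∃ E : ℝ, Real.exp (-(H₀ * (th α * dB x y ^ α))) ≤ E ∧ E ≤ 1 ∧
      |Ruelle A v x - Ruelle A v y| ≤ E * t + (1 - E) * O := by
  set px : Circ → ℝ := fun a => Real.exp (A (cons a x)) with hpx_def
  set py : Circ → ℝ := fun a => Real.exp (A (cons a y)) with hpy_def
  set q : Circ → ℝ := fun a => min (px a) (py a) with hq_def
  set vx : Circ → ℝ := fun a => v (cons a x) with hvx_def
  set vy : Circ → ℝ := fun a => v (cons a y) with hvy_def
  have hcA : Continuous A := holder_continuous hα0 A hA
  have hcpx : Continuous px := Real.continuous_exp.comp (hcA.comp (continuous_cons x))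
  have hcpy : Continuous py := Real.continuous_exp.comp (hcA.comp (continuous_cons y))
  have hcq : Continuous q := hcpx.min hcpy
  have hcvx : Continuous vx := hc.comp (continuous_cons x)
  have hcvy : Continuous vy := hc.comp (continuous_cons y)
  have ipx : Integrable px haarC := integrable_of_continuous _ hcpx
  have ipy : Integrable py haarC := integrable_of_continuous _ hcpy
  have iq : Integrable q haarC := integrable_of_continuous _ hcq
  set E : ℝ := ∫ a, q a ∂haarC with hE_def
  set c : ℝ := ⨅ z, v z with hc_def
  have hbdd : BddBelow (Set.range v) := ⟨-S, by
    rintro _ ⟨z, rfl⟩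
    linarith [(abs_le.mp (hb z)).1]⟩
  have hcle : ∀ z, c ≤ v z := fun z => ciInf_le hbdd z
  have hO0 : 0 ≤ O := by linarith [ho x x]
  have hOc : ∀ p, v p - c ≤ O := by
    intro p
    have : v p - O ≤ c := le_ciInf (fun z => by linarith [ho p z])
    linarith
  -- pointwise bounds on q
  have hq_nonneg : ∀ a, 0 ≤ q a := fun a => le_min (Real.exp_pos _).le (Real.exp_pos _).le
  have hq_le_px : ∀ a, q a ≤ px a := fun a => min_le_left _ _
  have hq_le_py : ∀ a, q a ≤ py a := fun a => min_le_right _ _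
  set β : ℝ := Real.exp (-(H₀ * (th α * dB x y ^ α))) with hβ_def
  have hnx : ∫ a, px a ∂haarC = 1 := hnorm x
  have hny : ∫ a, py a ∂haarC = 1 := hnorm y
  have hqlow : ∀ a, β * px a ≤ q a := by
    intro a
    have hda : dB (cons a x) (cons a y) = 2⁻¹ * dB x y := dB_cons a x y
    have hAd : |A (cons a x) - A (cons a y)| ≤ H₀ * (th α * dB x y ^ α) := by
      have := hA (cons a x) (cons a y)
      rwa [hda, half_rpow _ (dB_nonneg x y)] at this
    have h1 : β * px a ≤ py a := by
      rw [hβ_def, hpx_def, hpy_def]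
      simp only [← Real.exp_add]
      apply Real.exp_le_exp.mpr
      have := (abs_le.mp hAd).2
      linarith
    have h2 : β * px a ≤ px a := by
      have hβ1 : β ≤ 1 := by
        rw [hβ_def]
        apply Real.exp_le_one_iff.mpr
        have : 0 ≤ H₀ * (th α * dB x y ^ α) := by
          apply mul_nonneg hH (mul_nonneg th_pos.le (Real.rpow_nonneg (dB_nonneg x y) α))
        linarith
      nlinarith [Real.exp_pos (A (cons a x))]
    exact le_min h2 h1
  have hElow : β ≤ E := by
    calc β = β * ∫ a, px a ∂haarC := by rw [hnx, mul_one]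
      _ = ∫ a, β * px a ∂haarC := (integral_const_mul β px).symm
      _ ≤ E := integral_mono (ipx.const_mul β) iq hqlow
  have hE1 : E ≤ 1 := by
    have : E ≤ ∫ a, px a ∂haarC := integral_mono iq ipx hq_le_px
    rwa [hnx] at this
  refine ⟨E, hElow, hE1, ?_⟩
  -- integrability of all products
  have ipxvx : Integrable (fun a => px a * vx a) haarC :=
    integrable_of_continuous _ (hcpx.mul hcvx)
  have ipyvy : Integrable (fun a => py a * vy a) haarC :=
    integrable_of_continuous _ (hcpy.mul hcvy)
  have iqvx : Integrable (fun a => q a * vx a) haarC :=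
    integrable_of_continuous _ (hcq.mul hcvx)
  have iqvy : Integrable (fun a => q a * vy a) haarC :=
    integrable_of_continuous _ (hcq.mul hcvy)
  set I1 : ℝ := ∫ a, px a * vx a ∂haarC with hI1
  set I2 : ℝ := ∫ a, py a * vy a ∂haarC with hI2
  set J1 : ℝ := ∫ a, q a * vx a ∂haarC with hJ1
  set J2 : ℝ := ∫ a, q a * vy a ∂haarC with hJ2
  have hRx : Ruelle A v x = I1 := rfl
  have hRy : Ruelle A v y = I2 := rfl
  -- the three pieces
  have hT1 : ∫ a, q a * (vx a - vy a) ∂haarC = J1 - J2 := by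
    simp only [mul_sub]
    exact integral_sub iqvx iqvy
  have hmass : ∫ a, (px a - q a) ∂haarC = 1 - E := by
    rw [integral_sub ipx iq, hnx]
  have hmassy : ∫ a, (py a - q a) ∂haarC = 1 - E := by
    rw [integral_sub ipy iq, hny]
  have hT2 : ∫ a, (px a - q a) * (vx a - c) ∂haarC = I1 - J1 - c * (1 - E) := by
    have heq : (fun a => (px a - q a) * (vx a - c)) =
        (fun a => (px a * vx a - q a * vx a) - c * (px a - q a)) := by
      funext a; ring
    have i1 : Integrable (fun a => px a * vx a - q a * vx a) haarC := ipxvx.sub iqvx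
    have i2 : Integrable (fun a => c * (px a - q a)) haarC := (ipx.sub iq).const_mul c
    rw [heq, integral_sub i1 i2, integral_sub ipxvx iqvx, integral_const_mul, hmass]
  have hT3 : ∫ a, (py a - q a) * (vy a - c) ∂haarC = I2 - J2 - c * (1 - E) := by
    have heq : (fun a => (py a - q a) * (vy a - c)) =
        (fun a => (py a * vy a - q a * vy a) - c * (py a - q a)) := by
      funext a; ring
    have i1 : Integrable (fun a => py a * vy a - q a * vy a) haarC := ipyvy.sub iqvy
    have i2 : Integrable (fun a => c * (py a - q a)) haarC := (ipy.sub iq).const_mul c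
    rw [heq, integral_sub i1 i2, integral_sub ipyvy iqvy, integral_const_mul, hmassy]
  -- bounds on the pieces
  have hT1ub : J1 - J2 ≤ E * t := by
    rw [← hT1]
    have : ∫ a, q a * (vx a - vy a) ∂haarC ≤ ∫ a, q a * t ∂haarC := by
      apply integral_mono (integrable_of_continuous _ (hcq.mul (hcvx.sub hcvy)))
        (iq.mul_const t)
      intro a
      have h1 := (abs_le.mp (hd a)).2
      have h2 := hq_nonneg a
      exact mul_le_mul_of_nonneg_left h1 h2
    rwa [integral_mul_const] at this
  have hT1lb : -(E * t) ≤ J1 - J2 := by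
    rw [← hT1]
    have : ∫ a, q a * (-t) ∂haarC ≤ ∫ a, q a * (vx a - vy a) ∂haarC := by
      apply integral_mono (iq.mul_const (-t))
        (integrable_of_continuous _ (hcq.mul (hcvx.sub hcvy)))
      intro a
      have h1 : -t ≤ vx a - vy a := (abs_le.mp (hd a)).1
      have h2 := hq_nonneg a
      exact mul_le_mul_of_nonneg_left h1 h2
    rw [integral_mul_const] at this
    linarith
  have hT2ub : I1 - J1 - c * (1 - E) ≤ (1 - E) * O := by
    rw [← hT2]
    have : ∫ a, (px a - q a) * (vx a - c) ∂haarC ≤ ∫ a, (px a - q a) * O ∂haarC := by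
      apply integral_mono
        (integrable_of_continuous _ ((hcpx.sub hcq).mul (hcvx.sub continuous_const)))
        ((ipx.sub iq).mul_const O)
      intro a
      have h1 : 0 ≤ px a - q a := by linarith [hq_le_px a]
      have h2 : vx a - c ≤ O := hOc _
      exact mul_le_mul_of_nonneg_left h2 h1
    rwa [integral_mul_const, hmass] at this
  have hT2lb : 0 ≤ I1 - J1 - c * (1 - E) := by
    rw [← hT2]
    apply integral_nonneg
    intro a
    have h1 : 0 ≤ px a - q a := by linarith [hq_le_px a]
    have h2 : 0 ≤ vx a - c := by linarith [hcle (cons a x)]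
    exact mul_nonneg h1 h2
  have hT3ub : I2 - J2 - c * (1 - E) ≤ (1 - E) * O := by
    rw [← hT3]
    have : ∫ a, (py a - q a) * (vy a - c) ∂haarC ≤ ∫ a, (py a - q a) * O ∂haarC := by
      apply integral_mono
        (integrable_of_continuous _ ((hcpy.sub hcq).mul (hcvy.sub continuous_const)))
        ((ipy.sub iq).mul_const O)
      intro a
      have h1 : 0 ≤ py a - q a := by linarith [hq_le_py a]
      have h2 : vy a - c ≤ O := hOc _
      exact mul_le_mul_of_nonneg_left h2 h1
    rwa [integral_mul_const, hmassy] at this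
  have hT3lb : 0 ≤ I2 - J2 - c * (1 - E) := by
    rw [← hT3]
    apply integral_nonneg
    intro a
    have h1 : 0 ≤ py a - q a := by linarith [hq_le_py a]
    have h2 : 0 ≤ vy a - c := by linarith [hcle (cons a y)]
    exact mul_nonneg h1 h2
  rw [hRx, hRy]
  rw [abs_le]
  constructor <;> nlinarith


def BB (α H₀ : ℝ) : ℝ := th α * H₀ / (1 - th α)

lemma BB_nonneg {α H₀ : ℝ} (hα : 0 < α) (hH : 0 ≤ H₀) : 0 ≤ BB α H₀ :=
  div_nonneg (mul_nonneg th_pos.le hH) (by linarith [th_lt_one hα])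

lemma BB_id {α H₀ : ℝ} (hα : 0 < α) : th α * (H₀ + BB α H₀) = BB α H₀ := by
  have h1 : (1 : ℝ) - th α ≠ 0 := by linarith [th_lt_one hα]
  have h2 : BB α H₀ * (1 - th α) = th α * H₀ := by
    unfold BB
    rw [div_mul_cancel₀ _ h1]
  linarith [h2]

lemma one_sub_exp_le (s : ℝ) : 1 - Real.exp (-s) ≤ s := by
  have := Real.add_one_le_exp (-s)
  linarith

def Good (α K S O : ℝ) (v : Bs → ℝ) : Prop :=
  Continuous v ∧ (∀ z, |v z| ≤ S) ∧ (∀ x y, |v x - v y| ≤ K * dB x y ^ α) ∧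
    (∀ p q, v p - v q ≤ O)

lemma exists_ne_bs : ∃ x y : Bs, x ≠ y := by
  have h2 : ((Real.pi : ℝ) : Circ) ≠ 0 := by
    rw [Ne, AddCircle.coe_eq_zero_iff]
    rintro ⟨n, hn⟩
    have hπ := Real.pi_pos
    have : (n : ℝ) * (2 * Real.pi) = Real.pi := by
      simpa [zsmul_eq_mul] using hn
    have h2n : (2 * (n:ℝ) - 1) * Real.pi = 0 := by ring_nf; linarith
    have : (2 * (n:ℝ) - 1) = 0 := by
      rcases mul_eq_zero.mp h2n with h | h
      · exact h
      · exact absurd h (ne_of_gt hπ)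
    have : (2 * n - 1 : ℤ) = 0 := by exact_mod_cast this
    omega
  refine ⟨(fun _ => ((Real.pi : ℝ) : Circ)), (fun _ => 0), ?_⟩
  intro h
  exact h2 (congrFun h 0)

lemma good_O_nonneg {α K S O : ℝ} {v : Bs → ℝ} (hg : Good α K S O v) : 0 ≤ O := by
  have := hg.2.2.2 (Classical.arbitrary _) (Classical.arbitrary _)
  linarith

lemma good_K_nonneg {α K S O : ℝ} {v : Bs → ℝ} (hg : Good α K S O v) : 0 ≤ K := by
  obtain ⟨x, y, hxy⟩ := exists_ne_bs
  have h1 := (hg.2.2.1 x y)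
  have h2 : 0 < dB x y ^ α := Real.rpow_pos_of_pos (dB_pos x y hxy) α
  nlinarith [abs_nonneg (v x - v y)]

lemma good_S_nonneg {α K S O : ℝ} {v : Bs → ℝ} (hg : Good α K S O v) : 0 ≤ S :=
  le_trans (abs_nonneg _) (hg.2.1 (Classical.arbitrary _))

lemma good_mono_K {α K K' S O : ℝ} {v : Bs → ℝ} (hg : Good α K S O v) (h : K ≤ K') :
    Good α K' S O v := by
  refine ⟨hg.1, hg.2.1, fun x y => ?_, hg.2.2.2⟩
  refine (hg.2.2.1 x y).trans ?_
  exact mul_le_mul_of_nonneg_right h (Real.rpow_nonneg (dB_nonneg x y) α)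

lemma ruelle_sup_bound {α H₀ : ℝ} {A : Bs → ℝ} (hα0 : 0 < α)
    (hA : IsHolderB α H₀ A) (hnorm : NormalizedB A)
    (v : Bs → ℝ) (hc : Continuous v) (S : ℝ) (hb : ∀ z, |v z| ≤ S) :
    ∀ z, |Ruelle A v z| ≤ S := by
  intro z
  have hcA : Continuous A := holder_continuous hα0 A hA
  have hcpx : Continuous (fun a => Real.exp (A (cons a z))) :=
    Real.continuous_exp.comp (hcA.comp (continuous_cons z))
  have hcvx : Continuous (fun a => v (cons a z)) := hc.comp (continuous_cons z)
  have hint : Integrable (fun a => Real.exp (A (cons a z)) * S) haarC :=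
    (integrable_of_continuous _ hcpx).mul_const S
  have h1 : ‖∫ a, Real.exp (A (cons a z)) * v (cons a z) ∂haarC‖ ≤
      ∫ a, Real.exp (A (cons a z)) * S ∂haarC := by
    apply norm_integral_le_of_norm_le hint
    apply ae_of_all
    intro a
    rw [Real.norm_eq_abs, abs_mul, abs_of_pos (Real.exp_pos _)]
    exact mul_le_mul_of_nonneg_left (hb _) (Real.exp_pos _).le
  rw [integral_mul_const, hnorm z, one_mul] at h1
  exact h1

lemma good_step {α H₀ : ℝ} {A : Bs → ℝ} (hα0 : 0 < α) (hH : 0 ≤ H₀)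
    (hA : IsHolderB α H₀ A) (hnorm : NormalizedB A)
    {K S O : ℝ} {v : Bs → ℝ} (hg : Good α K S O v) :
    Good α (th α * (K + H₀ * O)) S O (Ruelle A v) := by
  obtain ⟨hc, hb, hhol, hosc⟩ := hg
  have hO0 : 0 ≤ O := good_O_nonneg ⟨hc, hb, hhol, hosc⟩
  have hK0 : 0 ≤ K := good_K_nonneg ⟨hc, hb, hhol, hosc⟩
  have hhol' : ∀ x y, |Ruelle A v x - Ruelle A v y| ≤
      th α * (K + H₀ * O) * dB x y ^ α := by
    intro x y
    have hd : ∀ a, |v (cons a x) - v (cons a y)| ≤ K * (th α * dB x y ^ α) := by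
      intro a
      have := hhol (cons a x) (cons a y)
      rwa [dB_cons, half_rpow _ (dB_nonneg x y)] at this
    have hdpos : 0 ≤ dB x y ^ α := Real.rpow_nonneg (dB_nonneg x y) α
    have ht0 : 0 ≤ K * (th α * dB x y ^ α) :=
      mul_nonneg hK0 (mul_nonneg th_pos.le hdpos)
    obtain ⟨E, hE1, hE2, hE3⟩ := step hα0 hH hA hnorm v hc S hb O hosc x y _ ht0 hd
    have hβ : 1 - E ≤ H₀ * (th α * dB x y ^ α) := by
      have h1 := one_sub_exp_le (H₀ * (th α * dB x y ^ α))
      linarith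
    have hEt : E * (K * (th α * dB x y ^ α)) ≤ K * (th α * dB x y ^ α) := by
      nlinarith
    calc |Ruelle A v x - Ruelle A v y| ≤ E * (K * (th α * dB x y ^ α)) + (1 - E) * O := hE3
      _ ≤ K * (th α * dB x y ^ α) + H₀ * (th α * dB x y ^ α) * O := by nlinarith
      _ = th α * (K + H₀ * O) * dB x y ^ α := by ring
  refine ⟨holder_continuous hα0 _ hhol', ruelle_sup_bound hα0 hA hnorm v hc S hb,
    hhol', ?_⟩
  intro x y
  have hd : ∀ a, |v (cons a x) - v (cons a y)| ≤ O := by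
    intro a
    rw [abs_le]
    exact ⟨by linarith [hosc (cons a y) (cons a x)], hosc _ _⟩
  obtain ⟨E, hE1, hE2, hE3⟩ := step hα0 hH hA hnorm v hc S hb O hosc x y O hO0 hd
  have := (abs_le.mp hE3).2
  nlinarith

lemma good_iter {α H₀ : ℝ} {A : Bs → ℝ} (hα0 : 0 < α) (hH : 0 ≤ H₀)
    (hA : IsHolderB α H₀ A) (hnorm : NormalizedB A)
    {K S O : ℝ} {v : Bs → ℝ} (hg : Good α K S O v) :
    ∀ n : ℕ, Good α (th α ^ n * K + BB α H₀ * O) S O ((Ruelle A)^[n] v) := by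
  have hO0 : 0 ≤ O := good_O_nonneg hg
  intro n
  induction n with
  | zero =>
    simp only [pow_zero, one_mul, Function.iterate_zero_apply]
    apply good_mono_K hg
    have : 0 ≤ BB α H₀ * O := mul_nonneg (BB_nonneg hα0 hH) hO0
    linarith
  | succ n ih =>
    rw [Function.iterate_succ_apply']
    have h2 := good_step hα0 hH hA hnorm ih
    apply good_mono_K h2
    have : th α * (th α ^ n * K + BB α H₀ * O + H₀ * O) =
        th α ^ (n+1) * K + th α * (H₀ + BB α H₀) * O := by ring
    rw [this, BB_id hα0]

lemma key {α H₀ : ℝ} {A : Bs → ℝ} (hα0 : 0 < α) (hH : 0 ≤ H₀)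
    (hA : IsHolderB α H₀ A) (hnorm : NormalizedB A)
    {K S O : ℝ} {v : Bs → ℝ} (hg : Good α K S O v) :
    ∀ n : ℕ, ∀ x y : Bs, |(Ruelle A)^[n] v x - (Ruelle A)^[n] v y| ≤
      th α ^ n * K * dB x y ^ α + (1 - Real.exp (-(BB α H₀ * dB x y ^ α))) * O := by
  have hO0 : 0 ≤ O := good_O_nonneg hg
  have hK0 : 0 ≤ K := good_K_nonneg hg
  have hB0 : 0 ≤ BB α H₀ := BB_nonneg hα0 hH
  intro n
  induction n with
  | zero =>
    intro x y
    simp only [pow_zero, one_mul, Function.iterate_zero_apply]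
    have hd : 0 ≤ dB x y ^ α := Real.rpow_nonneg (dB_nonneg x y) α
    have h2 : Real.exp (-(BB α H₀ * dB x y ^ α)) ≤ 1 := by
      apply Real.exp_le_one_iff.mpr
      nlinarith
    have := hg.2.2.1 x y
    nlinarith
  | succ n ih =>
    intro x y
    set d : ℝ := dB x y ^ α with hd_def
    have hd0 : 0 ≤ d := Real.rpow_nonneg (dB_nonneg x y) α
    obtain ⟨hcu, hbu, hholu, hoscu⟩ := good_iter hα0 hH hA hnorm hg n
    set t : ℝ := th α ^ n * K * (th α * d) + (1 - Real.exp (-(BB α H₀ * (th α * d)))) * O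
      with ht_def
    have hexp1 : Real.exp (-(BB α H₀ * (th α * d))) ≤ 1 := by
      have h := mul_nonneg hB0 (mul_nonneg (th_pos (α := α)).le hd0)
      exact Real.exp_le_one_iff.mpr (by linarith)
    have ht0 : 0 ≤ t := by
      have h1 : 0 ≤ th α ^ n * K * (th α * d) :=
        mul_nonneg (mul_nonneg (pow_nonneg th_pos.le n) hK0)
          (mul_nonneg th_pos.le hd0)
      nlinarith
    have hdcons : ∀ a : Circ, |(Ruelle A)^[n] v (cons a x) - (Ruelle A)^[n] v (cons a y)| ≤ t := by
      intro a
      have h := ih (cons a x) (cons a y)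
      rw [dB_cons, half_rpow _ (dB_nonneg x y), ← hd_def] at h
      exact h.trans (le_of_eq (by rw [ht_def]))
    obtain ⟨E, hE1, hE2, hE3⟩ := step hα0 hH hA hnorm _ hcu S hbu O hoscu x y t ht0 hdcons
    rw [Function.iterate_succ_apply']
    have hmain : E * t + (1 - E) * O ≤
        th α ^ (n+1) * K * d + (1 - Real.exp (-(BB α H₀ * d))) * O := by
      set e2 : ℝ := Real.exp (-(BB α H₀ * (th α * d))) with he2
      set β0 : ℝ := Real.exp (-(H₀ * (th α * d))) with hβ0
      have he2pos : 0 < e2 := Real.exp_pos _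
      have hβ0pos : 0 < β0 := Real.exp_pos _
      have hprod : β0 * e2 = Real.exp (-(BB α H₀ * d)) := by
        rw [hβ0, he2, ← Real.exp_add]
        congr 1
        have hid := BB_id (H₀ := H₀) hα0
        linear_combination (-d) * hid
      have hX0 : 0 ≤ th α ^ n * K * (th α * d) :=
        mul_nonneg (mul_nonneg (pow_nonneg th_pos.le n) hK0)
          (mul_nonneg th_pos.le hd0)
      have h1 : E * (th α ^ n * K * (th α * d)) ≤ th α ^ n * K * (th α * d) := by
        nlinarith [mul_nonneg (sub_nonneg.mpr hE2) hX0]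
      have h2 : E * ((1 - e2) * O) + (1 - E) * O = (1 - E * e2) * O := by ring
      have h3 : (1 - E * e2) * O ≤ (1 - β0 * e2) * O := by
        nlinarith [mul_nonneg (mul_nonneg (sub_nonneg.mpr hE1) he2pos.le) hO0]
      have h4 : th α ^ n * K * (th α * d) = th α ^ (n+1) * K * d := by ring
      calc E * t + (1 - E) * O
          = E * (th α ^ n * K * (th α * d)) + ((1 - E * e2) * O) := by
            rw [ht_def]; ring
        _ ≤ th α ^ (n+1) * K * d + (1 - β0 * e2) * O := by nlinarith
        _ = th α ^ (n+1) * K * d + (1 - Real.exp (-(BB α H₀ * d))) * O := by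
            rw [hprod]
    calc |Ruelle A ((Ruelle A)^[n] v) x - Ruelle A ((Ruelle A)^[n] v) y|
        ≤ E * t + (1 - E) * O := hE3
      _ ≤ _ := hmain

def DD (α : ℝ) : ℝ := (2 * Real.pi) ^ α

lemma DD_pos {α : ℝ} : 0 < DD α := Real.rpow_pos_of_pos (by positivity) α

lemma rpow_dB_le_DD {α : ℝ} (hα : 0 < α) (x y : Bs) : dB x y ^ α ≤ DD α :=
  Real.rpow_le_rpow (dB_nonneg x y) (dB_le x y) hα.le

lemma good_block {α H₀ : ℝ} {A : Bs → ℝ} (hα0 : 0 < α) (hH : 0 ≤ H₀)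
    (hA : IsHolderB α H₀ A) (hnorm : NormalizedB A)
    {K S O : ℝ} {v : Bs → ℝ} (hg : Good α K S O v) (n : ℕ) :
    Good α (th α ^ n * K + BB α H₀ * O) S
      (th α ^ n * K * DD α + (1 - Real.exp (-(BB α H₀ * DD α))) * O)
      ((Ruelle A)^[n] v) := by
  obtain ⟨hc, hb, hhol, hosc⟩ := good_iter hα0 hH hA hnorm hg n
  have hO0 : 0 ≤ O := good_O_nonneg hg
  have hK0 : 0 ≤ K := good_K_nonneg hg
  have hB0 : 0 ≤ BB α H₀ := BB_nonneg hα0 hH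
  refine ⟨hc, hb, hhol, ?_⟩
  intro p q
  have h := key hα0 hH hA hnorm hg n p q
  have hdle : dB p q ^ α ≤ DD α := rpow_dB_le_DD hα0 p q
  have hd0 : 0 ≤ dB p q ^ α := Real.rpow_nonneg (dB_nonneg p q) α
  have hexp : Real.exp (-(BB α H₀ * DD α)) ≤ Real.exp (-(BB α H₀ * dB p q ^ α)) := by
    apply Real.exp_le_exp.mpr
    nlinarith
  have habs := (abs_le.mp h).2
  have h1 : th α ^ n * K * dB p q ^ α ≤ th α ^ n * K * DD α :=
    mul_le_mul_of_nonneg_left hdle (mul_nonneg (pow_nonneg th_pos.le n) hK0)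
  have h2 : (1 - Real.exp (-(BB α H₀ * dB p q ^ α))) * O ≤
      (1 - Real.exp (-(BB α H₀ * DD α))) * O :=
    mul_le_mul_of_nonneg_right (by linarith) hO0
  calc (Ruelle A)^[n] v p - (Ruelle A)^[n] v q ≤ |(Ruelle A)^[n] v p - (Ruelle A)^[n] v q| :=
        le_abs_self _
    _ ≤ th α ^ n * K * dB p q ^ α + (1 - Real.exp (-(BB α H₀ * dB p q ^ α))) * O := h
    _ ≤ _ := by linarith

end SGaux

open SGaux in
/-- spectral gap of the normalized Ruelle operator on the space of
α-Hölder functions of `m`-integral zero. -/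
theorem spectral_gap (α H : ℝ) (hα0 : 0 < α) (hα1 : α ≤ 1)
    (A : Bs → ℝ) (hA : IsHolderB α H A) (hnorm : NormalizedB A)
    (m : Measure Bs) (hm : IsProbabilityMeasure m) (hfix : FixedDual A m)
    (hmuniq : ∀ m' : Measure Bs, IsProbabilityMeasure m' → FixedDual A m' → m' = m) :
    ∃ C : ℝ, 0 < C ∧ ∃ r : ℝ, 0 < r ∧ r < 1 ∧
      ∀ w : Bs → ℝ, (∃ Hw, IsHolderB α Hw w) → ∫ x, w x ∂m = 0 →
        ∀ n : ℕ, 1 ≤ n →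
          holderNorm α ((Ruelle A)^[n] w) ≤ C * r ^ n * holderNorm α w := by
  classical
  set H₀ : ℝ := max H 0 with hH0_def
  have hH0 : 0 ≤ H₀ := le_max_right _ _
  have hA0 : IsHolderB α H₀ A := fun x y => (hA x y).trans
    (mul_le_mul_of_nonneg_right (le_max_left _ _) (Real.rpow_nonneg (dB_nonneg x y) α))
  set θ : ℝ := th α with hθ_def
  have hθ0 : 0 < θ := th_pos
  have hθ1 : θ < 1 := th_lt_one hα0
  set Bv : ℝ := BB α H₀ with hBv_def
  have hBv : 0 ≤ Bv := BB_nonneg hα0 hH0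
  set Dv : ℝ := DD α with hDv_def
  have hDv : 0 < Dv := DD_pos
  set δ : ℝ := Real.exp (-(Bv * Dv)) with hδ_def
  have hδ0 : 0 < δ := Real.exp_pos _
  have hδ1 : δ ≤ 1 := Real.exp_le_one_iff.mpr (neg_nonpos.mpr (mul_nonneg hBv hDv.le))
  set ρ : ℝ := 1 - δ/2 with hρ_def
  have hρ0 : 0 < ρ := by rw [hρ_def]; linarith only [hδ1, hδ0]
  have hρ1 : ρ < 1 := by rw [hρ_def]; linarith only [hδ0]
  set βc : ℝ := δ / (2*(Bv+1)) with hβc_def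
  have hβc0 : 0 < βc := div_pos hδ0 (by linarith)
  obtain ⟨n₀, hn₀1, hn₀⟩ : ∃ n₀ : ℕ, 1 ≤ n₀ ∧ θ ^ n₀ * (Dv + βc) ≤ ρ * βc := by
    have h := tendsto_pow_atTop_nhds_zero_of_lt_one hθ0.le hθ1
    have hpos : 0 < ρ * βc / (Dv + βc) := by positivity
    have h3 : ∀ᶠ k : ℕ in atTop, θ^k < ρ*βc/(Dv+βc) := h.eventually (gt_mem_nhds hpos)
    obtain ⟨N, hN⟩ := eventually_atTop.mp h3
    refine ⟨max N 1, le_max_right _ _, ?_⟩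
    have h4 := hN (max N 1) (le_max_left _ _)
    rw [lt_div_iff₀ (by positivity)] at h4
    exact h4.le
  set r : ℝ := ρ ^ ((n₀:ℝ)⁻¹) with hr_def
  have hn₀R : (0:ℝ) < (n₀:ℝ) := by exact_mod_cast hn₀1
  have hr0 : 0 < r := Real.rpow_pos_of_pos hρ0 _
  have hr1 : r < 1 := Real.rpow_lt_one hρ0.le hρ1 (by positivity)
  set C₁ : ℝ := max ((Dv+1)/βc) (1+Bv) with hC₁_def
  have hC₁ : 0 < C₁ := lt_of_lt_of_le (by positivity) (le_max_left _ _)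
  have hmax2 : (0:ℝ) < max 2 βc := lt_of_lt_of_le (by norm_num) (le_max_left _ _)
  set C : ℝ := C₁ * max 2 βc / ρ with hC_def
  have hC : 0 < C := div_pos (mul_pos hC₁ hmax2) hρ0
  refine ⟨C, hC, r, hr0, hr1, ?_⟩
  intro w hw hw0 n hn
  obtain ⟨Hw, hHw⟩ := hw
  set Hw' : ℝ := max Hw 0 with hHw'_def
  have hHw'0 : 0 ≤ Hw' := le_max_right _ _
  have hHw' : ∀ x y, |w x - w y| ≤ Hw' * dB x y ^ α := fun x y => (hHw x y).trans
    (mul_le_mul_of_nonneg_right (le_max_left _ _) (Real.rpow_nonneg (dB_nonneg x y) α))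
  set Sw : ℝ := supNormB w with hSw_def
  set Kw : ℝ := holderSemi α w with hKw_def
  -- sup norm facts
  have hbddS : BddAbove (Set.range (fun z : Bs => |w z|)) := by
    refine ⟨|w (Classical.arbitrary _)| + Hw' * Dv, ?_⟩
    rintro _ ⟨z, rfl⟩
    have h1 := hHw' z (Classical.arbitrary _)
    have h2 : Hw' * dB z (Classical.arbitrary _) ^ α ≤ Hw' * Dv :=
      mul_le_mul_of_nonneg_left (rpow_dB_le_DD hα0 _ _) hHw'0
    have h3 := abs_sub_abs_le_abs_sub (w z) (w (Classical.arbitrary _))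
    simp only []
    linarith only [h1, h2, h3]
  have hSb : ∀ z, |w z| ≤ Sw := fun z => le_ciSup hbddS z
  have hSw0 : 0 ≤ Sw := le_trans (abs_nonneg _) (hSb (Classical.arbitrary _))
  -- Hölder seminorm facts
  have hbddK : BddAbove {c : ℝ | ∃ x y, x ≠ y ∧ c = |w x - w y| / dB x y ^ α} := by
    refine ⟨Hw', ?_⟩
    rintro c ⟨x, y, hxy, rfl⟩
    rw [div_le_iff₀ (Real.rpow_pos_of_pos (dB_pos x y hxy) α)]
    exact hHw' x y
  have hKwb : ∀ x y, |w x - w y| ≤ Kw * dB x y ^ α := by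
    intro x y
    by_cases hxy : x = y
    · subst hxy
      simp [dB_self, Real.zero_rpow (ne_of_gt hα0)]
    · have hd : 0 < dB x y ^ α := Real.rpow_pos_of_pos (dB_pos x y hxy) α
      have h1 : |w x - w y| / dB x y ^ α ≤ Kw :=
        le_csSup hbddK ⟨x, y, hxy, rfl⟩
      rw [div_le_iff₀ hd] at h1
      exact h1
  have hKw0 : 0 ≤ Kw := by
    obtain ⟨x, y, hxy⟩ := exists_ne_bs
    have h1 : |w x - w y| / dB x y ^ α ≤ Kw := le_csSup hbddK ⟨x, y, hxy, rfl⟩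
    have h2 : 0 ≤ |w x - w y| / dB x y ^ α :=
      div_nonneg (abs_nonneg _) (Real.rpow_nonneg (dB_nonneg x y) α)
    linarith only [h1, h2]
  -- base Good
  have hgood0 : Good α Kw Sw (2*Sw) w := by
    refine ⟨holder_continuous hα0 w hKwb, hSb, hKwb, fun p q => ?_⟩
    have h1 := abs_le.mp (hSb p)
    have h2 := abs_le.mp (hSb q)
    linarith only [h1.1, h1.2, h2.1, h2.2]
  -- zero integral chain
  have hzero : ∀ k : ℕ, ∫ x, (Ruelle A)^[k] w x ∂m = 0 := by
    intro k
    induction k with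
    | zero => simpa using hw0
    | succ k ih =>
      have hg := good_iter hα0 hH0 hA0 hnorm hgood0 k
      have heq : ∀ x, (Ruelle A)^[k+1] w x = Ruelle A ((Ruelle A)^[k] w) x := by
        intro x; rw [Function.iterate_succ_apply']
      simp only [heq]
      rw [hfix _ hg.1 ⟨Sw, hg.2.1⟩]
      exact ih
  -- block induction
  have hblock : ∀ j : ℕ, ∃ K O : ℝ, 0 ≤ K ∧ 0 ≤ O ∧
      Good α K Sw O ((Ruelle A)^[n₀*j] w) ∧
      O + βc*K ≤ ρ^j * (2*Sw + βc*Kw) := by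
    intro j
    induction j with
    | zero =>
      refine ⟨Kw, 2*Sw, hKw0, by positivity, ?_, by norm_num⟩
      simpa using hgood0
    | succ j ih =>
      obtain ⟨K, O, hK0, hO0, hg, hNle⟩ := ih
      refine ⟨θ^n₀*K + Bv*O, θ^n₀*K*Dv + (1 - δ)*O,
        add_nonneg (mul_nonneg (pow_nonneg hθ0.le _) hK0) (mul_nonneg hBv hO0),
        add_nonneg (mul_nonneg (mul_nonneg (pow_nonneg hθ0.le _) hK0) hDv.le)
          (mul_nonneg (by linarith only [hδ1]) hO0), ?_, ?_⟩
      · have hgb := good_block hα0 hH0 hA0 hnorm hg n₀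
        have heq : (Ruelle A)^[n₀*(j+1)] w = (Ruelle A)^[n₀] ((Ruelle A)^[n₀*j] w) := by
          rw [show n₀*(j+1) = n₀ + n₀*j by ring, Function.iterate_add_apply]
        rw [heq]
        exact hgb
      · have h2 : βc * Bv ≤ δ/2 := by
          rw [hβc_def, div_mul_eq_mul_div, div_le_div_iff₀ (by linarith only [hBv]) (by norm_num)]
          nlinarith only [hδ0, hBv, mul_nonneg hδ0.le hBv]
        have h2' : 1 - δ + βc*Bv ≤ ρ := by rw [hρ_def]; linarith only [h2]
        calc θ^n₀*K*Dv + (1 - δ)*O + βc*(θ^n₀*K + Bv*O)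
            = (θ^n₀*(Dv+βc))*K + (1-δ+βc*Bv)*O := by ring
          _ ≤ (ρ*βc)*K + ρ*O := by
              have ha := mul_le_mul_of_nonneg_right hn₀ hK0
              have hb := mul_le_mul_of_nonneg_right h2' hO0
              linarith only [ha, hb]
          _ = ρ*(O + βc*K) := by ring
          _ ≤ ρ*(ρ^j*(2*Sw + βc*Kw)) := mul_le_mul_of_nonneg_left hNle hρ0.le
          _ = ρ^(j+1)*(2*Sw + βc*Kw) := by ring
  -- final assembly
  set j : ℕ := n / n₀ with hj_def
  set s : ℕ := n % n₀ with hs_def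
  have hn₀pos : 0 < n₀ := hn₀1
  have hslt : s < n₀ := Nat.mod_lt n hn₀pos
  have hsn : s + n₀*j = n := Nat.mod_add_div n n₀
  obtain ⟨K, O, hK0, hO0, hg, hNle⟩ := hblock j
  have hgF := good_block hα0 hH0 hA0 hnorm hg s
  have hFeq : (Ruelle A)^[n] w = (Ruelle A)^[s] ((Ruelle A)^[n₀*j] w) := by
    rw [← hsn, Function.iterate_add_apply]
  rw [hFeq]
  set F : Bs → ℝ := (Ruelle A)^[s] ((Ruelle A)^[n₀*j] w) with hF_def
  obtain ⟨hcF, hbF, hholF, hoscF⟩ := hgF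
  set K₂ : ℝ := θ^s*K + Bv*O with hK₂_def
  set O₂ : ℝ := θ^s*K*Dv + (1 - δ)*O with hO₂_def
  have hK₂0 : 0 ≤ K₂ :=
    add_nonneg (mul_nonneg (pow_nonneg hθ0.le _) hK0) (mul_nonneg hBv hO0)
  have hFzero : ∫ x, F x ∂m = 0 := by
    rw [← hFeq]
    exact hzero n
  have hsup : ∀ z, |F z| ≤ O₂ := by
    intro z
    have hint : Integrable F m := by
      refine Integrable.mono' (integrable_const Sw) hcF.aestronglyMeasurable ?_
      exact ae_of_all _ (fun z => by simpa [Real.norm_eq_abs] using hbF z)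
    have h1 : F z = ∫ x, (F z - F x) ∂m := by
      rw [integral_sub (integrable_const _) hint, hFzero, integral_const]
      simp [measure_univ]
    rw [h1]
    have h2 : ‖∫ x, (F z - F x) ∂m‖ ≤ ∫ _x, O₂ ∂m := by
      refine norm_integral_le_of_norm_le (integrable_const O₂) (ae_of_all _ fun x => ?_)
      rw [Real.norm_eq_abs, abs_le]
      exact ⟨by linarith only [hoscF x z], hoscF z x⟩
    rw [Real.norm_eq_abs, integral_const] at h2
    simp only [probReal_univ, smul_eq_mul, one_mul] at h2
    exact h2
  have hsupN : supNormB F ≤ O₂ := ciSup_le hsup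
  have hsemiN : holderSemi α F ≤ K₂ := by
    apply Real.sSup_le _ hK₂0
    rintro c ⟨x, y, hxy, rfl⟩
    rw [div_le_iff₀ (Real.rpow_pos_of_pos (dB_pos x y hxy) α)]
    exact hholF x y
  have hnormF : holderNorm α F ≤ O₂ + K₂ := add_le_add hsupN hsemiN
  have hθs1 : θ^s ≤ 1 := pow_le_one₀ hθ0.le hθ1.le
  have h1 : O₂ + K₂ ≤ (Dv+1)*K + (1+Bv)*O := by
    have ha : θ^s*K ≤ K := by
      calc θ^s*K ≤ 1*K := mul_le_mul_of_nonneg_right hθs1 hK0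
        _ = K := one_mul K
    have hb : θ^s*K*Dv ≤ K*Dv := mul_le_mul_of_nonneg_right ha hDv.le
    rw [hO₂_def, hK₂_def]
    have hd := mul_nonneg hδ0.le hO0
    have he := mul_nonneg hBv hO0
    linarith only [ha, hb, hd, he]
  have h2 : (Dv+1)*K + (1+Bv)*O ≤ C₁*(O + βc*K) := by
    have hC1a : Dv + 1 ≤ C₁*βc := by
      have := le_max_left ((Dv+1)/βc) (1+Bv)
      rw [div_le_iff₀ hβc0] at this
      linarith
    have hC1b : 1 + Bv ≤ C₁ := le_max_right _ _
    have ha := mul_le_mul_of_nonneg_right hC1a hK0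
    have hb := mul_le_mul_of_nonneg_right hC1b hO0
    linarith only [ha, hb]
  have h4 : ρ^j ≤ r^n / ρ := by
    have e1 : r ^ ((j+1)*n₀) = ρ^(j+1) := by
      rw [hr_def, ← Real.rpow_natCast (ρ ^ ((n₀:ℝ)⁻¹)) ((j+1)*n₀),
        ← Real.rpow_mul hρ0.le]
      rw [show ((n₀:ℝ))⁻¹ * (((j+1)*n₀ : ℕ) : ℝ) = ((j+1 : ℕ) : ℝ) by
        push_cast; field_simp]
      rw [Real.rpow_natCast]
    have hne : n ≤ (j+1)*n₀ := by
      have hmul : (j+1)*n₀ = n₀*j + n₀ := by ring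
      omega
    have e2 : r ^ ((j+1)*n₀) ≤ r^n := pow_le_pow_of_le_one hr0.le hr1.le hne
    rw [le_div_iff₀ hρ0]
    calc ρ^j * ρ = ρ^(j+1) := by ring
      _ = r ^ ((j+1)*n₀) := e1.symm
      _ ≤ r^n := e2
  have h5 : 2*Sw + βc*Kw ≤ max 2 βc * (Sw + Kw) := by
    have ha := mul_le_mul_of_nonneg_right (le_max_left 2 βc) hSw0
    have hb := mul_le_mul_of_nonneg_right (le_max_right 2 βc) hKw0
    linarith only [ha, hb]
  have hN₀0 : 0 ≤ 2*Sw + βc*Kw := by positivity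
  have hwnorm : holderNorm α w = Sw + Kw := rfl
  have hfinal : holderNorm α F ≤ C * r^n * (Sw + Kw) := by
    have hstep1 : holderNorm α F ≤ C₁*(O + βc*K) := by linarith only [hnormF, h1, h2]
    have hstep2 : C₁*(O + βc*K) ≤ C₁*(ρ^j * (2*Sw + βc*Kw)) :=
      mul_le_mul_of_nonneg_left hNle hC₁.le
    have hstep3 : C₁*(ρ^j * (2*Sw + βc*Kw)) ≤ C₁*((r^n/ρ) * (2*Sw + βc*Kw)) := by
      apply mul_le_mul_of_nonneg_left _ hC₁.le
      exact mul_le_mul_of_nonneg_right h4 hN₀0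
    have hstep4 : C₁*((r^n/ρ) * (2*Sw + βc*Kw)) ≤ C₁*((r^n/ρ) * (max 2 βc * (Sw + Kw))) := by
      apply mul_le_mul_of_nonneg_left _ hC₁.le
      apply mul_le_mul_of_nonneg_left h5
      positivity
    have heqC : C₁*((r^n/ρ) * (max 2 βc * (Sw + Kw))) = C * r^n * (Sw + Kw) := by
      rw [hC_def]; field_simp
    linarith only [hstep1, hstep2, hstep3, hstep4, heqC]
  rw [hwnorm]
  exact hfinal
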